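/- Define η : X_{Ã} → X_A by deleting every occurrence of the symbol 0 from a sequence. Then η is well-defined, continuous, surjective, and satisfies σ_A^{k̃₁(x̃)}(η(σ_{Ã}(x̃))) = σ_A^{l̃₁(x̃)}(η(x̃)) for all x̃ ∈ X_{Ã}, where k̃₁(x̃) = 0 and l̃₁(x̃) = 0 if x̃₁ = 0, l̃₁(x̃) = 1 otherwise. -/

import Mathlib

/-- One-sided shift space over symbols `{1, …, N}`. -/
def ShiftSpace (N : ℕ) (A : ℕ → ℕ → ℕ) : Set (ℕ → ℕ) :=
  {x | (∀ n, 1 ≤ x n ∧ x n ≤ N) ∧ ∀ n, A (x n) (x (n + 1)) = 1}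

/-- One-sided shift space over symbols `{0, 1, …, N}`. -/
def ShiftSpace0 (N : ℕ) (A : ℕ → ℕ → ℕ) : Set (ℕ → ℕ) :=
  {x | (∀ n, x n ≤ N) ∧ ∀ n, A (x n) (x (n + 1)) = 1}

/-- The shift on raw sequences. -/
def rawShift (x : ℕ → ℕ) : ℕ → ℕ := fun n => x (n + 1)

/-- The expansion `Ã` of the matrix `A` at the vertex `1`, over the symbol set
`{0, 1, …, N}`: `Ã(1,0) = 1`, `Ã(1,j) = 0` for `j ≥ 1`; `Ã(0,0) = 0`,
`Ã(0,j) = A(1,j)` for `j ≥ 1`; `Ã(i,0) = 0`, `Ã(i,j) = A(i,j)` for `i ≥ 2`. -/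
def expandAt1 (A : ℕ → ℕ → ℕ) : ℕ → ℕ → ℕ := fun i j =>
  if i = 1 then (if j = 0 then 1 else 0)
  else if i = 0 then (if j = 0 then 0 else A 1 j)
  else if j = 0 then 0 else A i j

/-- The position in `ξ(x)` of the `n`-th letter of `x`, where `ξ` replaces
every symbol `1` by the word `(1,0)`. -/
def posf (x : ℕ → ℕ) : ℕ → ℕ
  | 0 => 0
  | n + 1 => posf x n + (if x n = 1 then 2 else 1)

/-- The map `ξ : X_A → X_Ã` replacing every occurrence of the symbol `1`
by the word `(1,0)`. -/
noncomputable def xiMap (x : ℕ → ℕ) : ℕ → ℕ := fun m =>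
  letI := Classical.dec (∃ n, posf x n = m)
  if h : ∃ n, posf x n = m then x h.choose else 0

/-- The map `η : X_Ã → X_A` deleting every occurrence of the symbol `0`. -/
noncomputable def etaMap (x : ℕ → ℕ) : ℕ → ℕ := fun m =>
  x (Nat.nth (fun i => x i ≠ 0) m)

/- ### Auxiliary lemmas -/

section Aux

lemma no_consec {N : ℕ} {A : ℕ → ℕ → ℕ} {x : ℕ → ℕ}
    (hx : x ∈ ShiftSpace0 N (expandAt1 A)) : ∀ n, x n = 0 → x (n + 1) ≠ 0 := by
  intro n h0 h1
  have t := hx.2 n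
  simp [expandAt1, h0, h1] at t

lemma infinite_ne_zero {N : ℕ} {A : ℕ → ℕ → ℕ} {x : ℕ → ℕ}
    (hx : x ∈ ShiftSpace0 N (expandAt1 A)) : {i | x i ≠ 0}.Infinite := by
  apply Set.infinite_of_not_bddAbove
  rintro ⟨b, hb⟩
  by_cases h : x (b + 1) = 0
  · have h2 := no_consec hx (b + 1) h
    have := hb (show b + 2 ∈ {i | x i ≠ 0} from h2)
    omega
  · have := hb (show b + 1 ∈ {i | x i ≠ 0} from h)
    omega

lemma not_mem_between {p : ℕ → Prop} [DecidablePred p] (hp : (setOf p).Infinite) {m t : ℕ}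
    (h1 : Nat.nth p m < t) (h2 : t < Nat.nth p (m + 1)) : ¬p t := by
  intro hpt
  have hc := Nat.nth_count hpt
  have l1 : m < Nat.count p t := (Nat.lt_nth_iff_count_lt hp).2 h1
  rw [← hc] at h2
  have l2 : Nat.count p t < m + 1 := (Nat.nth_lt_nth hp).1 h2
  omega

lemma nth_succ_cases {N : ℕ} {A : ℕ → ℕ → ℕ} {x : ℕ → ℕ}
    (hx : x ∈ ShiftSpace0 N (expandAt1 A)) (m : ℕ) :
    Nat.nth (fun i => x i ≠ 0) (m + 1) = Nat.nth (fun i => x i ≠ 0) m + 1 ∨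
      (Nat.nth (fun i => x i ≠ 0) (m + 1) = Nat.nth (fun i => x i ≠ 0) m + 2 ∧
        x (Nat.nth (fun i => x i ≠ 0) m + 1) = 0) := by
  have hp := infinite_ne_zero hx
  set p : ℕ → Prop := fun i => x i ≠ 0 with hpdef
  have hlt : Nat.nth p m < Nat.nth p (m + 1) := (Nat.nth_lt_nth hp).2 (by omega)
  by_cases h1 : Nat.nth p (m + 1) = Nat.nth p m + 1
  · exact Or.inl h1
  · have hz : x (Nat.nth p m + 1) = 0 := by
      have := not_mem_between hp (show Nat.nth p m < Nat.nth p m + 1 by omega)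
        (show Nat.nth p m + 1 < Nat.nth p (m + 1) by omega)
      simpa [hpdef] using this
    have hnz : x (Nat.nth p m + 2) ≠ 0 := no_consec hx _ hz
    right
    refine ⟨?_, hz⟩
    by_contra h2
    have hlt2 : Nat.nth p m + 2 < Nat.nth p (m + 1) := by omega
    exact not_mem_between hp (show Nat.nth p m < Nat.nth p m + 2 by omega) hlt2 hnz

lemma count_congr {p q : ℕ → Prop} [DecidablePred p] [DecidablePred q]
    {K : ℕ} (h : ∀ i < K, (p i ↔ q i)) : ∀ t ≤ K, Nat.count p t = Nat.count q t := by
  intro t ht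
  induction t with
  | zero => simp
  | succ t ih =>
    rw [Nat.count_succ, Nat.count_succ, ih (by omega)]
    have hiff := h t (by omega)
    by_cases hpt : p t
    · simp [hpt, hiff.1 hpt]
    · simp [hpt, mt hiff.2 hpt]

lemma nth_congr {p q : ℕ → Prop} [DecidablePred p] [DecidablePred q]
    (hp : (setOf p).Infinite)
    {K m : ℕ} (h : ∀ i < K, (p i ↔ q i))
    (h1 : Nat.nth p m < K) : Nat.nth p m = Nat.nth q m := by
  have hpm : p (Nat.nth p m) := Nat.nth_mem_of_infinite hp m
  have hqm : q (Nat.nth p m) := (h _ h1).1 hpm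
  have key := Nat.nth_count hqm
  rw [← count_congr h _ h1.le, Nat.count_nth_of_infinite hp] at key
  exact key.symm

lemma count_ge {N : ℕ} {A : ℕ → ℕ → ℕ} {x : ℕ → ℕ}
    (hx : x ∈ ShiftSpace0 N (expandAt1 A)) :
    ∀ k, k ≤ Nat.count (fun i => x i ≠ 0) (2 * k) := by
  intro k
  induction k with
  | zero => simp
  | succ k ih =>
    have h2 : 2 * (k + 1) = 2 * k + 1 + 1 := by ring
    rw [h2, Nat.count_succ, Nat.count_succ]
    by_cases h : x (2 * k) = 0
    · have hnz := no_consec hx (2 * k) h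
      rw [if_neg (not_not_intro h), if_pos hnz]
      omega
    · rw [if_pos h]
      split <;> omega

lemma nth_lt_bound {N : ℕ} {A : ℕ → ℕ → ℕ} {x : ℕ → ℕ}
    (hx : x ∈ ShiftSpace0 N (expandAt1 A)) (m : ℕ) :
    Nat.nth (fun i => x i ≠ 0) m < 2 * m + 2 := by
  have hp := infinite_ne_zero hx
  have h1 : m < Nat.count (fun i => x i ≠ 0) (2 * m + 2) := by
    have hcg := count_ge hx (m + 1)
    have h2 : 2 * (m + 1) = 2 * m + 2 := by ring
    rw [h2] at hcg
    omega
  exact (Nat.lt_nth_iff_count_lt hp).1 h1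

lemma eta_agree {N : ℕ} {A : ℕ → ℕ → ℕ} {x y : ℕ → ℕ}
    (hx : x ∈ ShiftSpace0 N (expandAt1 A)) (hy : y ∈ ShiftSpace0 N (expandAt1 A))
    (m : ℕ) (h : ∀ i < 2 * m + 2, y i = x i) : etaMap y m = etaMap x m := by
  have hpx := infinite_ne_zero hx
  have hpy := infinite_ne_zero hy
  have hiff : ∀ i < 2 * m + 2, ((fun i => y i ≠ 0) i ↔ (fun i => x i ≠ 0) i) := by
    intro i hi
    simp [h i hi]
  have hb := nth_lt_bound hy m
  have heq : Nat.nth (fun i => y i ≠ 0) m = Nat.nth (fun i => x i ≠ 0) m :=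
    nth_congr hpy hiff hb
  show y (Nat.nth (fun i => y i ≠ 0) m) = x (Nat.nth (fun i => x i ≠ 0) m)
  rw [heq, h _ (heq ▸ hb)]

/- posf lemmas -/

lemma posf_succ (x : ℕ → ℕ) (n : ℕ) :
    posf x (n + 1) = posf x n + (if x n = 1 then 2 else 1) := rfl

lemma posf_strictMono (x : ℕ → ℕ) : StrictMono (posf x) := by
  apply strictMono_nat_of_lt_succ
  intro n
  rw [posf_succ]
  split <;> omega

lemma xiMap_posf (x : ℕ → ℕ) (n : ℕ) : xiMap x (posf x n) = x n := by
  unfold xiMap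
  have h : ∃ k, posf x k = posf x n := ⟨n, rfl⟩
  rw [dif_pos h]
  congr 1
  exact (posf_strictMono x).injective h.choose_spec

lemma xiMap_not (x : ℕ → ℕ) (m : ℕ) (h : ∀ n, posf x n ≠ m) : xiMap x m = 0 := by
  unfold xiMap
  rw [dif_neg]
  rintro ⟨n, hn⟩
  exact h n hn

lemma posf_gap (x : ℕ → ℕ) {n j : ℕ} (h1 : posf x n < j) (h2 : j < posf x (n + 1)) :
    ∀ k, posf x k ≠ j := by
  intro k hk
  rcases le_or_gt k n with h | h
  · have := (posf_strictMono x).monotone h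
    omega
  · have := (posf_strictMono x).monotone (show n + 1 ≤ k by omega)
    omega

lemma posf_cover (x : ℕ → ℕ) : ∀ m, ∃ n, posf x n ≤ m ∧ m < posf x (n + 1) := by
  intro m
  induction m with
  | zero =>
    refine ⟨0, Nat.le_refl _, ?_⟩
    rw [posf_succ]
    split <;> simp [posf]
  | succ m ih =>
    obtain ⟨n, h1, h2⟩ := ih
    by_cases h : m + 1 < posf x (n + 1)
    · exact ⟨n, by omega, h⟩
    · refine ⟨n + 1, by omega, ?_⟩
      rw [posf_succ x (n + 1)]
      split <;> omega

/- shift count lemmas -/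

lemma count_shift {x : ℕ → ℕ} (h0 : x 0 = 0) (t : ℕ) :
    Nat.count (fun i => x i ≠ 0) (t + 1) = Nat.count (fun i => x (i + 1) ≠ 0) t := by
  induction t with
  | zero => simp [Nat.count_succ, h0]
  | succ t ih =>
    rw [Nat.count_succ, Nat.count_succ (p := fun i => x (i + 1) ≠ 0), ih]

lemma count_shift' {x : ℕ → ℕ} (h0 : x 0 ≠ 0) (t : ℕ) :
    Nat.count (fun i => x i ≠ 0) (t + 1) = Nat.count (fun i => x (i + 1) ≠ 0) t + 1 := by
  induction t with
  | zero => simp [Nat.count_succ, h0]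
  | succ t ih =>
    rw [Nat.count_succ, Nat.count_succ (p := fun i => x (i + 1) ≠ 0), ih]
    ring_nf

lemma shift_mem {N : ℕ} {A : ℕ → ℕ → ℕ} {x : ℕ → ℕ} (hx : x ∈ ShiftSpace0 N A) :
    rawShift x ∈ ShiftSpace0 N A :=
  ⟨fun n => hx.1 (n + 1), fun n => hx.2 (n + 1)⟩

end Aux

/-- `η` maps `X_Ã` onto `X_A`, is continuous and surjective, and
satisfies `σ_A^{k̃₁(x̃)}(η(σ_Ã(x̃))) = σ_A^{l̃₁(x̃)}(η(x̃))` with `k̃₁ = 0` and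
`l̃₁(x̃) = 0` if `x̃₁ = 0`, `l̃₁(x̃) = 1` otherwise. -/
theorem etaMap_properties (N : ℕ) (A : ℕ → ℕ → ℕ) :
    (∀ x ∈ ShiftSpace0 N (expandAt1 A), etaMap x ∈ ShiftSpace N A) ∧
    ContinuousOn etaMap (ShiftSpace0 N (expandAt1 A)) ∧
    (∀ x ∈ ShiftSpace N A, ∃ y ∈ ShiftSpace0 N (expandAt1 A), etaMap y = x) ∧
    (∀ x ∈ ShiftSpace0 N (expandAt1 A),
      etaMap (rawShift x) = rawShift^[if x 0 = 0 then 0 else 1] (etaMap x)) := by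
  refine ⟨?_, ?_, ?_, ?_⟩
  · -- maps into X_A
    intro x hx
    have hp := infinite_ne_zero hx
    constructor
    · intro m
      have hnz : x (Nat.nth (fun i => x i ≠ 0) m) ≠ 0 := Nat.nth_mem_of_infinite hp m
      refine ⟨?_, hx.1 _⟩
      show 1 ≤ x (Nat.nth (fun i => x i ≠ 0) m)
      omega
    · intro m
      show A (x (Nat.nth (fun i => x i ≠ 0) m)) (x (Nat.nth (fun i => x i ≠ 0) (m + 1))) = 1
      set P := Nat.nth (fun i => x i ≠ 0) m with hP
      set Q := Nat.nth (fun i => x i ≠ 0) (m + 1) with hQ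
      have hPnz : x P ≠ 0 := Nat.nth_mem_of_infinite hp m
      have hQnz : x Q ≠ 0 := Nat.nth_mem_of_infinite hp (m + 1)
      rcases nth_succ_cases hx m with h | ⟨h, hz⟩
      · rw [← hP, ← hQ] at h
        have t := hx.2 P
        rw [← h] at t
        by_cases h1 : x P = 1
        · simp [expandAt1, h1, hQnz] at t
        · simpa [expandAt1, h1, hPnz, hQnz] using t
      · rw [← hP, ← hQ] at h
        rw [← hP] at hz
        have t1 := hx.2 P
        rw [hz] at t1
        have hP1 : x P = 1 := by
          by_contra h1
          by_cases h2 : x P = 0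
          · simp [expandAt1, h2] at t1
          · simp [expandAt1, h1, h2] at t1
        have t2 := hx.2 (P + 1)
        rw [hz] at t2
        rw [show P + 1 + 1 = P + 2 from rfl, ← h] at t2
        rw [hP1]
        simpa [expandAt1, hQnz] using t2
  · -- continuity
    intro x hx
    rw [continuousWithinAt_pi]
    intro m
    have hsingle : ∀ i, ∀ᶠ y : ℕ → ℕ in nhds x, y i = x i := by
      intro i
      have h := (continuous_apply i).tendsto x
      rw [nhds_discrete ℕ, Filter.tendsto_pure] at h
      exact h
    have hev : ∀ K, ∀ᶠ y : ℕ → ℕ in nhds x, ∀ i < K, y i = x i := by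
      intro K
      induction K with
      | zero => simp
      | succ K ih =>
        filter_upwards [ih, hsingle K] with y h1 h2 i hi
        rcases Nat.lt_succ_iff_lt_or_eq.1 hi with h | h
        · exact h1 i h
        · rw [h]; exact h2
    show Filter.Tendsto (fun y => etaMap y m) (nhdsWithin x (ShiftSpace0 N (expandAt1 A)))
      (nhds (etaMap x m))
    apply Filter.Tendsto.congr' _ tendsto_const_nhds
    filter_upwards [(hev (2 * m + 2)).filter_mono nhdsWithin_le_nhds,
      self_mem_nhdsWithin] with y hy hys
    exact (eta_agree hx hys m hy).symm
  · -- surjectivity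
    intro x hx
    have hx1 : ∀ n, 1 ≤ x n ∧ x n ≤ N := hx.1
    have hrange : ∀ i, xiMap x i ≠ 0 ↔ ∃ n, posf x n = i := by
      intro i
      constructor
      · intro hne
        by_contra h
        push_neg at h
        exact hne (xiMap_not x i h)
      · rintro ⟨n, rfl⟩
        rw [xiMap_posf]
        have := hx1 n
        omega
    have hgap1 : ∀ n, x n = 1 → xiMap x (posf x n + 1) = 0 := by
      intro n hone
      apply xiMap_not
      have h2' : posf x n + 1 < posf x (n + 1) := by
        rw [posf_succ, if_pos hone]; omega
      exact posf_gap x (Nat.lt_succ_self _) h2'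
    have hymem : xiMap x ∈ ShiftSpace0 N (expandAt1 A) := by
      constructor
      · intro m
        by_cases h : ∃ n, posf x n = m
        · obtain ⟨n, rfl⟩ := h
          rw [xiMap_posf]
          exact (hx1 n).2
        · push_neg at h
          rw [xiMap_not x m h]
          exact Nat.zero_le N
      · intro m
        obtain ⟨n, h1, h2⟩ := posf_cover x m
        by_cases hone : x n = 1
        · rw [posf_succ, if_pos hone] at h2
          rcases (show m = posf x n ∨ m = posf x n + 1 by omega) with rfl | rfl
          · rw [xiMap_posf, hone, hgap1 n hone]
            simp [expandAt1]
          · rw [hgap1 n hone,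
              show posf x n + 1 + 1 = posf x (n + 1) by rw [posf_succ, if_pos hone],
              xiMap_posf]
            have hxn1 := hx1 (n + 1)
            have hA := hx.2 n
            rw [hone] at hA
            have hne : x (n + 1) ≠ 0 := by omega
            simp [expandAt1, hne, hA]
        · rw [posf_succ, if_neg hone] at h2
          have hm : m = posf x n := by omega
          subst hm
          rw [show posf x n + 1 = posf x (n + 1) by rw [posf_succ, if_neg hone],
            xiMap_posf, xiMap_posf]
          have hxn := hx1 n
          have hxn1 := hx1 (n + 1)
          have hA := hx.2 n
          have hne0 : x n ≠ 0 := by omega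
          have hne1 : x (n + 1) ≠ 0 := by omega
          simp [expandAt1, hone, hne0, hne1, hA]
    refine ⟨xiMap x, hymem, ?_⟩
    funext m
    have hcount : ∀ k, Nat.count (fun i => xiMap x i ≠ 0) (posf x k) = k := by
      intro k
      induction k with
      | zero => simp [posf]
      | succ k ih =>
        have hk : xiMap x (posf x k) ≠ 0 := (hrange _).2 ⟨k, rfl⟩
        by_cases hone : x k = 1
        · rw [posf_succ, if_pos hone,
            show posf x k + 2 = posf x k + 1 + 1 from rfl,
            Nat.count_succ, Nat.count_succ, ih]
          simp [hk, hgap1 k hone]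
        · rw [posf_succ, if_neg hone, Nat.count_succ, ih]
          simp [hk]
    have hk : xiMap x (posf x m) ≠ 0 := (hrange _).2 ⟨m, rfl⟩
    have hnth := Nat.nth_count (p := fun i => xiMap x i ≠ 0) hk
    rw [hcount] at hnth
    show xiMap x (Nat.nth (fun i => xiMap x i ≠ 0) m) = x m
    rw [hnth, xiMap_posf]
  · -- shift relation
    intro x hx
    have hp := infinite_ne_zero hx
    have hp' : {i | x (i + 1) ≠ 0}.Infinite := infinite_ne_zero (shift_mem hx)
    by_cases h0 : x 0 = 0
    · rw [if_pos h0, Function.iterate_zero, id]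
      funext m
      have hq : x (Nat.nth (fun i => x (i + 1) ≠ 0) m + 1) ≠ 0 :=
        Nat.nth_mem_of_infinite hp' m
      have key : Nat.nth (fun i => x i ≠ 0) m = Nat.nth (fun i => x (i + 1) ≠ 0) m + 1 := by
        have hc := Nat.nth_count (p := fun i => x i ≠ 0) hq
        rw [count_shift h0, Nat.count_nth_of_infinite hp'] at hc
        exact hc
      show (rawShift x) (Nat.nth (fun i => rawShift x i ≠ 0) m)
          = x (Nat.nth (fun i => x i ≠ 0) m)
      rw [key]
      rfl
    · rw [if_neg h0, Function.iterate_one]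
      funext m
      have hq : x (Nat.nth (fun i => x (i + 1) ≠ 0) m + 1) ≠ 0 :=
        Nat.nth_mem_of_infinite hp' m
      have key : Nat.nth (fun i => x i ≠ 0) (m + 1)
          = Nat.nth (fun i => x (i + 1) ≠ 0) m + 1 := by
        have hc := Nat.nth_count (p := fun i => x i ≠ 0) hq
        rw [count_shift' h0, Nat.count_nth_of_infinite hp'] at hc
        exact hc
      show (rawShift x) (Nat.nth (fun i => rawShift x i ≠ 0) m)
          = x (Nat.nth (fun i => x i ≠ 0) (m + 1))
      rw [key]
      rfl
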